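/- For every c ∈ ℂ and all constants c₁, c₂ ∈ ℂ, the function u(x) = e^{c x²/2} ( c₁ + c₂ ∫₀ˣ e^{−c t²} dt ) satisfies −u''(x) + (c² x² + c) u(x) = 0 for all x ∈ ℝ; moreover every twice differentiable solution of this equation on (0,1) is of this form. -/

import Mathlib

open MeasureTheory Set Filter


lemma const_of_deriv0 {f : ℝ → ℂ} {a b x y : ℝ}
    (h : ∀ z ∈ Set.Ioo a b, HasDerivAt f 0 z)
    (hx : x ∈ Set.Ioo a b) (hy : y ∈ Set.Ioo a b) : f x = f y := by
  refine (convex_Ioo a b).is_const_of_fderivWithin_eq_zero (𝕜 := ℝ)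
    (fun z hz => ((h z hz).differentiableAt).differentiableWithinAt) (fun z hz => ?_) hx hy
  rw [fderivWithin_of_isOpen isOpen_Ioo hz, (h z hz).hasFDerivAt.fderiv]
  ext
  simp

lemma hQ (c : ℂ) (x : ℝ) : HasDerivAt (fun y : ℝ => c * (y:ℂ)^2 / 2) (c * x) x := by
  have h0 : HasDerivAt (fun y : ℝ => (y:ℂ)) 1 x := Complex.ofRealCLM.hasDerivAt
  have := ((h0.mul h0).const_mul c).div_const 2
  simp only [pow_two]
  refine this.congr_deriv (Eq.symm ?_)
  push_cast
  ring

lemma hE (c : ℂ) (x : ℝ) :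
    HasDerivAt (fun y : ℝ => Complex.exp (c * (y:ℂ)^2 / 2))
      (c * x * Complex.exp (c * (x:ℂ)^2 / 2)) x := by
  simpa [mul_comm] using (hQ c x).cexp

lemma hQ2 (c : ℂ) (x : ℝ) :
    HasDerivAt (fun y : ℝ => Complex.exp (-c * (y:ℂ)^2))
      (-2 * c * x * Complex.exp (-c * (x:ℂ)^2)) x := by
  have h0 : HasDerivAt (fun y : ℝ => (y:ℂ)) 1 x := Complex.ofRealCLM.hasDerivAt
  have h1 : HasDerivAt (fun y : ℝ => -c * (y:ℂ)^2) (-2 * c * x) x := by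
    have := (h0.mul h0).const_mul (-c)
    simp only [pow_two]
    refine this.congr_deriv (Eq.symm ?_)
    push_cast
    ring
  have := h1.cexp
  refine this.congr_deriv (Eq.symm ?_)
  ring

lemma hF (c : ℂ) (x : ℝ) :
    HasDerivAt (fun y : ℝ => ∫ t in (0:ℝ)..y, Complex.exp (-c * (t:ℂ)^2))
      (Complex.exp (-c * (x:ℂ)^2)) x := by
  have hc : Continuous (fun t : ℝ => Complex.exp (-c * (t:ℂ)^2)) := by
    continuity
  exact intervalIntegral.integral_hasDerivAt_right (hc.intervalIntegrable _ _)
    hc.aestronglyMeasurable.stronglyMeasurableAtFilter hc.continuousAt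

lemma hLin (c : ℂ) (x : ℝ) : HasDerivAt (fun y : ℝ => c * (y:ℂ)) c x := by
  simpa using (Complex.ofRealCLM.hasDerivAt (x := x)).const_mul c

lemma hU1 (c c₁ c₂ : ℂ) (x : ℝ) :
    HasDerivAt (fun y : ℝ => Complex.exp (c * (y:ℂ)^2 / 2) *
        (c₁ + c₂ * ∫ t in (0:ℝ)..y, Complex.exp (-c * (t:ℂ)^2)))
      (c * x * Complex.exp (c * (x:ℂ)^2 / 2) *
        (c₁ + c₂ * ∫ t in (0:ℝ)..x, Complex.exp (-c * (t:ℂ)^2)) +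
       Complex.exp (c * (x:ℂ)^2 / 2) * (c₂ * Complex.exp (-c * (x:ℂ)^2))) x := by
  exact (hE c x).mul ((hF c x).const_mul c₂ |>.const_add c₁)

lemma hU2 (c c₁ c₂ : ℂ) (x : ℝ) :
    HasDerivAt (fun y : ℝ => c * (y:ℂ) * Complex.exp (c * (y:ℂ)^2 / 2) *
        (c₁ + c₂ * ∫ t in (0:ℝ)..y, Complex.exp (-c * (t:ℂ)^2)) +
       Complex.exp (c * (y:ℂ)^2 / 2) * (c₂ * Complex.exp (-c * (y:ℂ)^2)))
      ((c^2 * (x:ℂ)^2 + c) * (Complex.exp (c * (x:ℂ)^2 / 2) *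
        (c₁ + c₂ * ∫ t in (0:ℝ)..x, Complex.exp (-c * (t:ℂ)^2)))) x := by
  have h1 := (((hLin c x).mul (hE c x)).mul ((hF c x).const_mul c₂ |>.const_add c₁))
  have h2 := (hE c x).mul ((hQ2 c x).const_mul c₂)
  have := h1.add h2
  refine this.congr_deriv (Eq.symm ?_)
  simp only [Pi.mul_apply]
  ring

/-- for every c ∈ ℂ and all constants c₁, c₂ ∈ ℂ, the function
u(x) = e^{c x²/2} (c₁ + c₂ ∫₀ˣ e^{−c t²} dt) satisfies
−u''(x) + (c² x² + c) u(x) = 0 for all x ∈ ℝ; moreover every twice differentiable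
solution of this equation on (0,1) is of this form. -/
theorem stmt_16 (c : ℂ) :
    (∀ c₁ c₂ : ℂ, ∀ x : ℝ,
      -(deriv (deriv (fun y : ℝ => Complex.exp (c * (y : ℂ) ^ 2 / 2) *
          (c₁ + c₂ * ∫ t in (0:ℝ)..y, Complex.exp (-c * (t : ℂ) ^ 2)))) x) +
        (c ^ 2 * (x : ℂ) ^ 2 + c) *
          (Complex.exp (c * (x : ℂ) ^ 2 / 2) *
            (c₁ + c₂ * ∫ t in (0:ℝ)..x, Complex.exp (-c * (t : ℂ) ^ 2))) = 0) ∧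
    ∀ u : ℝ → ℂ,
      (∀ x ∈ Set.Ioo (0:ℝ) 1, DifferentiableAt ℝ u x ∧ DifferentiableAt ℝ (deriv u) x) →
      (∀ x ∈ Set.Ioo (0:ℝ) 1,
        -(deriv (deriv u) x) + (c ^ 2 * (x : ℂ) ^ 2 + c) * u x = 0) →
      ∃ c₁ c₂ : ℂ, ∀ x ∈ Set.Ioo (0:ℝ) 1,
        u x = Complex.exp (c * (x : ℂ) ^ 2 / 2) *
          (c₁ + c₂ * ∫ t in (0:ℝ)..x, Complex.exp (-c * (t : ℂ) ^ 2)) := by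
  constructor
  · intro c₁ c₂ x
    have hd1 : deriv (fun y : ℝ => Complex.exp (c * (y:ℂ)^2 / 2) *
        (c₁ + c₂ * ∫ t in (0:ℝ)..y, Complex.exp (-c * (t:ℂ)^2)))
        = fun y : ℝ => c * (y:ℂ) * Complex.exp (c * (y:ℂ)^2 / 2) *
          (c₁ + c₂ * ∫ t in (0:ℝ)..y, Complex.exp (-c * (t:ℂ)^2)) +
          Complex.exp (c * (y:ℂ)^2 / 2) * (c₂ * Complex.exp (-c * (y:ℂ)^2)) :=
      funext fun y => (hU1 c c₁ c₂ y).deriv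
    rw [hd1, (hU2 c c₁ c₂ x).deriv]
    ring
  · intro u hdiff heq
    have hhalf : (1/2 : ℝ) ∈ Set.Ioo (0:ℝ) 1 := by norm_num
    -- w has zero derivative on Ioo 0 1
    have hw0 : ∀ z ∈ Set.Ioo (0:ℝ) 1, HasDerivAt
        (fun x : ℝ => (deriv u x - c * x * u x) * Complex.exp (c * (x:ℂ)^2 / 2)) 0 z := by
      intro z hz
      have hdu : HasDerivAt u (deriv u z) z := (hdiff z hz).1.hasDerivAt
      have hdu2 : HasDerivAt (deriv u) (deriv (deriv u) z) z := (hdiff z hz).2.hasDerivAt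
      have inner : HasDerivAt (fun x : ℝ => deriv u x - c * x * u x)
          (deriv (deriv u) z - (c * u z + c * z * deriv u z)) z :=
        hdu2.sub ((hLin c z).mul hdu)
      have h2 := inner.mul (hE c z)
      have hode : deriv (deriv u) z = (c^2 * (z:ℂ)^2 + c) * u z := by
        linear_combination -(heq z hz)
      refine h2.congr_deriv (Eq.symm ?_)
      rw [hode]; ring
    set K : ℂ := (deriv u (1/2) - c * (1/2:ℝ) * u (1/2)) * Complex.exp (c * ((1/2:ℝ):ℂ)^2 / 2)
      with hK
    have hwK : ∀ x ∈ Set.Ioo (0:ℝ) 1,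
        (deriv u x - c * x * u x) * Complex.exp (c * (x:ℂ)^2 / 2) = K :=
      fun x hx => const_of_deriv0 hw0 hx hhalf
    -- h has zero derivative
    have hh0 : ∀ z ∈ Set.Ioo (0:ℝ) 1, HasDerivAt
        (fun x : ℝ => u x * Complex.exp (-(c * (x:ℂ)^2 / 2)) -
          K * ∫ t in (0:ℝ)..x, Complex.exp (-c * (t:ℂ)^2)) 0 z := by
      intro z hz
      have hdu : HasDerivAt u (deriv u z) z := (hdiff z hz).1.hasDerivAt
      have hEm : HasDerivAt (fun y : ℝ => Complex.exp (-(c * (y:ℂ)^2 / 2)))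
          (-(c * z) * Complex.exp (-(c * (z:ℂ)^2 / 2))) z := by
        simpa [mul_comm] using ((hQ c z).neg).cexp
      have part1 := hdu.mul hEm
      have part2 := (hF c z).const_mul K
      have total := part1.sub part2
      have e1 : Complex.exp (c * (z:ℂ)^2 / 2) * Complex.exp (-(c * (z:ℂ)^2 / 2)) = 1 := by
        rw [← Complex.exp_add]; ring_nf; exact Complex.exp_zero
      have e2 : Complex.exp (-(c * (z:ℂ)^2 / 2)) * Complex.exp (-(c * (z:ℂ)^2 / 2)) =
          Complex.exp (-c * (z:ℂ)^2) := by
        rw [← Complex.exp_add]; ring_nf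
      have key : (deriv u z - c * z * u z) * Complex.exp (-(c * (z:ℂ)^2 / 2)) =
          K * Complex.exp (-c * (z:ℂ)^2) := by
        rw [← e2]
        linear_combination (Complex.exp (-(c * (z:ℂ)^2 / 2)) *
            Complex.exp (-(c * (z:ℂ)^2 / 2))) * hwK z hz -
          (deriv u z - c * (z:ℂ) * u z) * Complex.exp (-(c * (z:ℂ)^2 / 2)) * e1
      refine total.congr_deriv (Eq.symm ?_)
      linear_combination -key
    refine ⟨(fun x : ℝ => u x * Complex.exp (-(c * (x:ℂ)^2 / 2)) -
        K * ∫ t in (0:ℝ)..x, Complex.exp (-c * (t:ℂ)^2)) (1/2), K, ?_⟩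
    intro x hx
    have h1 := const_of_deriv0 hh0 hx hhalf
    have e1 : Complex.exp (c * (x:ℂ)^2 / 2) * Complex.exp (-(c * (x:ℂ)^2 / 2)) = 1 := by
      rw [← Complex.exp_add]; ring_nf; exact Complex.exp_zero
    linear_combination Complex.exp (c * (x:ℂ)^2 / 2) * h1 - u x * e1
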